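/- For every κ ≥ 1 there exist positive constants c₁ and c₂ (depending only on κ) such that the following holds: for every L > 0, μ = L/κ, every f ∈ S_{μ,L} with minimizer x⋆ and minimum f⋆, every x₀, and every speed-restarted trajectory X^{sr} starting from x₀, one has f(X^{sr}(t)) − f⋆ ≤ (c₁ L ‖x₀ − x⋆‖²/2) · e^{−c₂ t √L} for all t ≥ 0. -/

import Mathlib

open Set Filter Topology

noncomputable section

abbrev E (n : ℕ) := EuclideanSpace ℝ (Fin n)

def MemFL (n : ℕ) (L : ℝ) (f : E n → ℝ) : Prop :=
  ConvexOn ℝ Set.univ f ∧ ContDiff ℝ 1 f ∧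
    ∀ x y, ‖gradient f x - gradient f y‖ ≤ L * ‖x - y‖

/-- The class `S_{μ,L}`: members of `F_L` such that `f(x) - μ‖x‖²/2` is convex. -/
def MemS (n : ℕ) (μ L : ℝ) (f : E n → ℝ) : Prop :=
  MemFL n L f ∧ ConvexOn ℝ Set.univ (fun x => f x - μ / 2 * ‖x‖ ^ 2)

def NesterovSol (n : ℕ) (f : E n → ℝ) (x0 : E n) (X : ℝ → E n) : Prop :=
  X 0 = x0 ∧
  ContDiffOn ℝ 1 X (Set.Ici 0) ∧
  ContDiffOn ℝ 2 X (Set.Ioi 0) ∧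
  derivWithin X (Set.Ici 0) 0 = 0 ∧
  ∀ t > (0:ℝ), deriv (deriv X) t + (3 / t) • deriv X t + gradient f (X t) = 0

/-- The speed restarting time of a trajectory `X`:
`T = sup { t > 0 : ∀ u ∈ (0,t), d/du ‖Ẋ(u)‖² > 0 }`. -/
def SpeedRestartTime (n : ℕ) (X : ℝ → E n) : ℝ :=
  sSup {t : ℝ | 0 < t ∧ ∀ u ∈ Set.Ioo (0:ℝ) t, 0 < deriv (fun v => ‖deriv X v‖ ^ 2) u}

/-- The speed-restarted trajectory from `x₀`, with restart times `τ 0 = 0`,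
`τ(i+1) = τ i + T(X^{sr}(τ i); f)`; on each interval between restarts, the shifted curve is
the Nesterov ODE solution started at the current point with zero velocity. -/
def SpeedRestarted (n : ℕ) (f : E n → ℝ) (x0 : E n) (Xsr : ℝ → E n) (τ : ℕ → ℝ) : Prop :=
  τ 0 = 0 ∧ Xsr 0 = x0 ∧ StrictMono τ ∧ Tendsto τ atTop atTop ∧
  ∀ i : ℕ, ∃ X : ℝ → E n,
    NesterovSol n f (Xsr (τ i)) X ∧
    τ (i + 1) = τ i + SpeedRestartTime n X ∧
    ∀ u : ℝ, 0 ≤ u → u ≤ τ (i + 1) - τ i → Xsr (τ i + u) = X u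


open InnerProductSpace
open scoped RealInnerProductSpace

-- chain rule along a curve
lemma hasDerivAt_comp_grad {n : ℕ} {f : E n → ℝ} (hf : ContDiff ℝ 1 f) {X : ℝ → E n} {V : E n}
    {t : ℝ} (hX : HasDerivAt X V t) :
    HasDerivAt (fun s => f (X s)) ⟪gradient f (X t), V⟫_ℝ t := by
  have hd : DifferentiableAt ℝ f (X t) := (hf.differentiable one_ne_zero) (X t)
  have h1 := hd.hasFDerivAt.comp_hasDerivAt t hX
  refine h1.congr_deriv ?_
  exact InnerProductSpace.toDual_symm_apply.symm

lemma convex_grad_le {n : ℕ} {f : E n → ℝ} (hconv : ConvexOn ℝ Set.univ f)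
    (hf : ContDiff ℝ 1 f) (x y : E n) :
    f x + ⟪gradient f x, y - x⟫_ℝ ≤ f y := by
  set g : ℝ → ℝ := fun s => f (s • (y - x) + x) with hg
  have hgconv : ConvexOn ℝ Set.univ g := by
    have := hconv.comp_affineMap (AffineMap.lineMap x y)
    have he : ∀ s : ℝ, (f ∘ (AffineMap.lineMap x y)) s = g s := by
      intro s
      simp only [Function.comp_apply, AffineMap.lineMap_apply_module, g]
      congr 1
      module
    simpa [Set.preimage_univ] using
      (ConvexOn.congr this (fun s _ => (he s)) :
        ConvexOn ℝ ((AffineMap.lineMap x y) ⁻¹' Set.univ) g)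
  have hline : HasDerivAt (fun s : ℝ => s • (y - x) + x) (y - x) (0:ℝ) := by
    simpa using ((hasDerivAt_id (0:ℝ)).smul_const (y - x)).add_const x
  have hgd : HasDerivAt g ⟪gradient f x, y - x⟫_ℝ 0 := by
    have := hasDerivAt_comp_grad hf hline
    simpa [g] using this
  have := hgconv.le_slope_of_hasDerivAt (Set.mem_univ (0:ℝ)) (Set.mem_univ (1:ℝ))
    one_pos hgd
  have hslope : slope g 0 1 = f y - f x := by
    simp [slope, g]
  rw [hslope] at this
  linarith

lemma hasGradientAt_half_norm_sq {n : ℕ} (μ : ℝ) (x : E n) :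
    HasGradientAt (fun y : E n => μ / 2 * ‖y‖ ^ 2) (μ • x) x := by
  rw [hasGradientAt_iff_hasFDerivAt]
  have h1 : HasFDerivAt (fun y : E n => ⟪y, y⟫_ℝ)
      ((fderivInnerCLM ℝ ((x : E n), x)).comp
        ((ContinuousLinearMap.id ℝ (E n)).prod (ContinuousLinearMap.id ℝ (E n)))) x :=
    (hasFDerivAt_id x).inner ℝ (hasFDerivAt_id x)
  have h2 := h1.const_mul (μ / 2)
  have he : (fun y : E n => μ / 2 * ⟪y, y⟫_ℝ) = fun y : E n => μ / 2 * ‖y‖ ^ 2 := by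
    funext y; rw [real_inner_self_eq_norm_sq]
  rw [he] at h2
  refine h2.congr_fderiv ?_
  ext v
  simp only [ContinuousLinearMap.smul_apply, ContinuousLinearMap.coe_comp', Function.comp_apply,
    ContinuousLinearMap.prod_apply, ContinuousLinearMap.coe_id', id_eq, fderivInnerCLM_apply,
    toDual_apply_apply]
  rw [real_inner_smul_left, real_inner_comm x v]
  simp [smul_eq_mul]; ring

lemma strong_convex_grad_le {n : ℕ} {f : E n → ℝ} {μ : ℝ}
    (hsc : ConvexOn ℝ Set.univ (fun x => f x - μ / 2 * ‖x‖ ^ 2))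
    (hf : ContDiff ℝ 1 f) (x y : E n) :
    f x + ⟪gradient f x, y - x⟫_ℝ + μ / 2 * ‖y - x‖ ^ 2 ≤ f y := by
  set h : E n → ℝ := fun z => f z - μ / 2 * ‖z‖ ^ 2 with hh
  have hcd : ContDiff ℝ 1 h := by
    have : ContDiff ℝ 1 (fun z : E n => μ / 2 * ‖z‖ ^ 2) :=
      (contDiff_const (c := μ/2)).mul (contDiff_norm_sq ℝ)
    exact hf.sub this
  have hgradh : ∀ z : E n, gradient h z = gradient f z - μ • z := by
    intro z
    have h1 : HasGradientAt f (gradient f z) z :=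
      ((hf.differentiable one_ne_zero) z).hasGradientAt
    have h2 := hasGradientAt_half_norm_sq (n := n) μ z
    have h3 : HasGradientAt h (gradient f z - μ • z) z := by
      rw [hasGradientAt_iff_hasFDerivAt] at h1 h2 ⊢
      rw [map_sub]
      exact h1.sub h2
    exact h3.gradient
  have := convex_grad_le hsc hcd x y
  rw [hgradh x] at this
  simp only [h, inner_sub_left] at this
  have hin : ⟪μ • x, y - x⟫_ℝ = μ * (⟪x, y⟫_ℝ - ‖x‖^2) := by
    rw [real_inner_smul_left, inner_sub_right, real_inner_self_eq_norm_sq]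
  have hns : ‖y - x‖^2 = ‖y‖^2 - 2 * ⟪x, y⟫_ℝ + ‖x‖^2 := by
    rw [@norm_sub_sq_real (E n), real_inner_comm]
  rw [hin] at this
  rw [hns]
  linarith

lemma gradient_min_eq_zero {n : ℕ} {f : E n → ℝ} (hf : ContDiff ℝ 1 f) {xstar : E n}
    (hmin : IsMinOn f Set.univ xstar) : gradient f xstar = 0 := by
  have hloc : IsLocalMin f xstar := hmin.isLocalMin Filter.univ_mem
  have : fderiv ℝ f xstar = 0 := hloc.fderiv_eq_zero
  rw [gradient, this, map_zero]

lemma grad_sq_lower {n : ℕ} {f : E n → ℝ} {μ : ℝ} (hμ : 0 < μ)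
    (hsc : ConvexOn ℝ Set.univ (fun x => f x - μ / 2 * ‖x‖ ^ 2))
    (hf : ContDiff ℝ 1 f) {xstar : E n} (hmin : IsMinOn f Set.univ xstar) (x : E n) :
    2 * μ * (f x - f xstar) ≤ ‖gradient f x‖ ^ 2 := by
  have h1 := strong_convex_grad_le hsc hf x xstar
  have h2 : ⟪gradient f x, xstar - x⟫_ℝ ≥ -(‖gradient f x‖ * ‖xstar - x‖) := by
    have := abs_real_inner_le_norm (gradient f x) (xstar - x)
    have := neg_abs_le ⟪gradient f x, xstar - x⟫_ℝ
    nlinarith [abs_real_inner_le_norm (gradient f x) (xstar - x)]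
  nlinarith [sq_nonneg (‖gradient f x‖ - μ * ‖xstar - x‖), sq_nonneg ‖xstar - x‖]

-- descent lemma
lemma descent_lemma {n : ℕ} {f : E n → ℝ} {L : ℝ} (hL : 0 < L)
    (hf : ContDiff ℝ 1 f) (hlip : ∀ a b : E n, ‖gradient f a - gradient f b‖ ≤ L * ‖a - b‖)
    (x y : E n) :
    f y ≤ f x + ⟪gradient f x, y - x⟫_ℝ + L / 2 * ‖y - x‖ ^ 2 := by
  set z : ℝ → E n := fun s => s • (y - x) + x with hz
  have hzd : ∀ s : ℝ, HasDerivAt z (y - x) s := by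
    intro s; simpa [z] using ((hasDerivAt_id s).smul_const (y - x)).add_const x
  set φ : ℝ → ℝ := fun s => f (z s) - s * ⟪gradient f x, y - x⟫_ℝ - s^2 * (L/2 * ‖y - x‖^2)
    with hφ
  have hφd : ∀ s : ℝ, HasDerivAt φ
      (⟪gradient f (z s), y - x⟫_ℝ - ⟪gradient f x, y - x⟫_ℝ - 2*s*(L/2*‖y-x‖^2)) s := by
    intro s
    have h1 := hasDerivAt_comp_grad hf (hzd s)
    have h2 : HasDerivAt (fun s : ℝ => s * ⟪gradient f x, y - x⟫_ℝ)
        ⟪gradient f x, y - x⟫_ℝ s := by simpa using (hasDerivAt_id s).mul_const _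
    have h3 : HasDerivAt (fun s : ℝ => s^2 * (L/2 * ‖y - x‖^2)) (2*s*(L/2*‖y-x‖^2)) s := by
      simpa using ((hasDerivAt_pow 2 s).mul_const (L/2 * ‖y - x‖^2))
    exact (h1.sub h2).sub h3
  have hmono : AntitoneOn φ (Set.Icc 0 1) := by
    apply antitoneOn_of_deriv_nonpos (convex_Icc 0 1)
    · exact fun s _ => ((hφd s).continuousAt).continuousWithinAt
    · intro s hs
      exact ((hφd s).differentiableAt).differentiableWithinAt
    · intro s hs
      rw [interior_Icc] at hs
      rw [(hφd s).deriv]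
      have hdist : ‖z s - x‖ = s * ‖y - x‖ := by
        simp only [z, add_sub_cancel_right]
        rw [norm_smul, Real.norm_eq_abs, abs_of_nonneg hs.1.le]
      have hinner : ⟪gradient f (z s) - gradient f x, y - x⟫_ℝ
          ≤ L * s * ‖y - x‖^2 := by
        calc ⟪gradient f (z s) - gradient f x, y - x⟫_ℝ
            ≤ ‖gradient f (z s) - gradient f x‖ * ‖y - x‖ := real_inner_le_norm _ _
          _ ≤ (L * ‖z s - x‖) * ‖y - x‖ := by
              apply mul_le_mul_of_nonneg_right (hlip _ _) (norm_nonneg _)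
          _ = L * s * ‖y - x‖^2 := by rw [hdist]; ring
      rw [inner_sub_left] at hinner
      nlinarith
  have h01 := hmono (Set.mem_Icc.mpr ⟨le_refl 0, zero_le_one⟩)
    (Set.mem_Icc.mpr ⟨zero_le_one, le_refl 1⟩) zero_le_one
  simp only [φ, z, zero_smul, zero_add, one_smul, sub_add_cancel, one_pow, zero_pow,
    one_mul, mul_zero, zero_mul, sub_zero] at h01
  linarith

lemma init_gap_le {n : ℕ} {f : E n → ℝ} {L : ℝ} (hL : 0 < L)
    (hf : ContDiff ℝ 1 f) (hlip : ∀ a b : E n, ‖gradient f a - gradient f b‖ ≤ L * ‖a - b‖)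
    {xstar : E n} (hmin : IsMinOn f Set.univ xstar) (x0 : E n) :
    f x0 - f xstar ≤ L / 2 * ‖x0 - xstar‖ ^ 2 := by
  have := descent_lemma hL hf hlip xstar x0
  rw [gradient_min_eq_zero hf hmin] at this
  simp at this
  linarith


lemma fence_pow {n : ℕ} {φ φ' : ℝ → E n} {b : ℝ}
    (hφc : ContinuousOn φ (Icc 0 b)) (hφ0 : φ 0 = 0)
    (hd : ∀ u ∈ Ico (0:ℝ) b, HasDerivWithinAt φ (φ' u) (Ici u) u)
    {c : ℝ} {k : ℕ} (hc : 0 ≤ c)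
    (hbound : ∀ u ∈ Ico (0:ℝ) b, ‖φ' u‖ ≤ c * u ^ k) :
    ∀ s ∈ Icc (0:ℝ) b, ‖φ s‖ ≤ c * s ^ (k+1) / (k+1) := by
  intro s hs
  have hB : ∀ u : ℝ, HasDerivAt (fun v => c * v ^ (k+1) / (k+1)) (c * u ^ k) u := by
    intro u
    have h1 : HasDerivAt (fun v : ℝ => v ^ (k+1)) ((k+1) * u ^ k) u := by
      simpa using hasDerivAt_pow (k+1) u
    have h2 := (h1.const_mul c).div_const ((k:ℝ)+1)
    have hne : ((k:ℝ)+1) ≠ 0 := by positivity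
    refine h2.congr_deriv ?_
    field_simp
  have := image_norm_le_of_norm_deriv_right_le_deriv_boundary hφc hd
    (by simp [hφ0]) hB hbound hs
  exact this

section Sol

variable {n : ℕ} {f : E n → ℝ} {x : E n} {X : ℝ → E n}

/-- acceleration -/
def Avec (f : E n → ℝ) (X : ℝ → E n) (t : ℝ) : E n :=
  -((3 / t) • deriv X t) - gradient f (X t)

lemma nes_hasDerivAt (hsol : NesterovSol n f x X) {t : ℝ} (ht : 0 < t) :
    HasDerivAt X (deriv X t) t := by
  have h := (hsol.2.2.1.differentiableOn (by norm_num)).differentiableAt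
    (Ioi_mem_nhds ht)
  exact h.hasDerivAt

lemma nes_contDiffOn_deriv (hsol : NesterovSol n f x X) :
    ContDiffOn ℝ 1 (deriv X) (Set.Ioi 0) :=
  hsol.2.2.1.deriv_of_isOpen isOpen_Ioi (by norm_num)

lemma nes_hasDerivAt_deriv (hsol : NesterovSol n f x X) {t : ℝ} (ht : 0 < t) :
    HasDerivAt (deriv X) (Avec f X t) t := by
  have hdiff : DifferentiableAt ℝ (deriv X) t :=
    ((nes_contDiffOn_deriv hsol).differentiableOn (by norm_num)).differentiableAt
      (Ioi_mem_nhds ht)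
  have heq : deriv (deriv X) t = Avec f X t := by
    have := hsol.2.2.2.2 t ht
    unfold Avec
    rw [add_assoc] at this
    have h2 := eq_neg_of_add_eq_zero_left this
    rw [h2]; abel
  exact heq ▸ hdiff.hasDerivAt

lemma nes_deriv_zero (hsol : NesterovSol n f x X) : deriv X 0 = 0 := by
  by_cases hdiff : DifferentiableAt ℝ X 0
  · rw [← hdiff.derivWithin (uniqueDiffOn_Ici (0:ℝ) 0 self_mem_Ici)]
    exact hsol.2.2.2.1
  · exact deriv_zero_of_not_differentiableAt hdiff

lemma nes_deriv_eq_on (hsol : NesterovSol n f x X) :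
    ∀ t ∈ Set.Ici (0:ℝ), derivWithin X (Set.Ici 0) t = deriv X t := by
  intro t ht
  rcases eq_or_lt_of_le (Set.mem_Ici.mp ht) with h | h
  · rw [← h, hsol.2.2.2.1, nes_deriv_zero hsol]
  · exact derivWithin_of_mem_nhds (Ici_mem_nhds h)

lemma nes_contOn_deriv (hsol : NesterovSol n f x X) :
    ContinuousOn (deriv X) (Set.Ici 0) := by
  have h := hsol.2.1.continuousOn_derivWithin (uniqueDiffOn_Ici 0) le_rfl
  exact h.congr fun t ht => (nes_deriv_eq_on hsol t ht).symm

lemma nes_contOn (hsol : NesterovSol n f x X) : ContinuousOn X (Set.Ici 0) :=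
  hsol.2.1.continuousOn

lemma nes_cont_grad (hf : ContDiff ℝ 1 f) : Continuous (fun y => gradient f y) := by
  have h : Continuous (fun y => fderiv ℝ f y) := hf.continuous_fderiv one_ne_zero
  exact (toDual ℝ (E n)).symm.continuous.comp h

/-- derivative of the squared speed -/
lemma nes_hasDerivAt_speed (hsol : NesterovSol n f x X) {t : ℝ} (ht : 0 < t) :
    HasDerivAt (fun v => ‖deriv X v‖ ^ 2) (2 * ⟪Avec f X t, deriv X t⟫_ℝ) t := by
  have h := (nes_hasDerivAt hsol ht : HasDerivAt X _ t)
  have hV := nes_hasDerivAt_deriv hsol ht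
  have h2 := hV.inner ℝ hV
  have he : (fun v => ⟪deriv X v, deriv X v⟫_ℝ) = fun v => ‖deriv X v‖ ^ 2 := by
    funext v; rw [real_inner_self_eq_norm_sq]
  rw [he] at h2
  refine h2.congr_deriv ?_
  rw [real_inner_comm]
  ring

lemma nes_hasDerivAt_f (hf : ContDiff ℝ 1 f) (hsol : NesterovSol n f x X) {t : ℝ} (ht : 0 < t) :
    HasDerivAt (fun v => f (X v)) ⟪gradient f (X t), deriv X t⟫_ℝ t :=
  hasDerivAt_comp_grad hf (nes_hasDerivAt hsol ht)

/-- energy -/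
def Energy (f : E n → ℝ) (X : ℝ → E n) (t : ℝ) : ℝ := f (X t) + ‖deriv X t‖ ^ 2 / 2

lemma nes_hasDerivAt_energy (hf : ContDiff ℝ 1 f) (hsol : NesterovSol n f x X)
    {t : ℝ} (ht : 0 < t) :
    HasDerivAt (Energy f X) (-(3 / t) * ‖deriv X t‖ ^ 2) t := by
  have h1 := nes_hasDerivAt_f hf hsol ht
  have h2 := (nes_hasDerivAt_speed hsol ht).div_const 2
  have h3 := h1.add h2
  refine h3.congr_deriv ?_
  have hA : ⟪Avec f X t, deriv X t⟫_ℝ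
      = -(3/t) * ‖deriv X t‖^2 - ⟪gradient f (X t), deriv X t⟫_ℝ := by
    unfold Avec
    rw [inner_sub_left, inner_neg_left, real_inner_smul_left, real_inner_self_eq_norm_sq]
    ring
  rw [hA]
  ring

lemma nes_contOn_speed (hsol : NesterovSol n f x X) :
    ContinuousOn (fun v => ‖deriv X v‖ ^ 2) (Set.Ici 0) :=
  ((nes_contOn_deriv hsol).norm).pow 2

lemma nes_contOn_energy (hf : ContDiff ℝ 1 f) (hsol : NesterovSol n f x X) :
    ContinuousOn (Energy f X) (Set.Ici 0) :=
  ((hf.continuous.comp_continuousOn (nes_contOn hsol)).add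
    (((nes_contOn_speed hsol)).div_const 2))

lemma nes_energy_antitone (hf : ContDiff ℝ 1 f) (hsol : NesterovSol n f x X) :
    AntitoneOn (Energy f X) (Set.Ici 0) := by
  apply antitoneOn_of_deriv_nonpos (convex_Ici 0) (nes_contOn_energy hf hsol)
  · intro t ht
    rw [interior_Ici] at ht
    exact (nes_hasDerivAt_energy hf hsol ht).differentiableAt.differentiableWithinAt
  · intro t ht
    rw [interior_Ici] at ht
    have ht' : (0:ℝ) < t := ht
    rw [(nes_hasDerivAt_energy hf hsol ht').deriv]
    have : (0:ℝ) ≤ ‖deriv X t‖^2 := sq_nonneg _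
    have h3t : 0 < 3 / t := by positivity
    nlinarith

lemma nes_energy_le (hf : ContDiff ℝ 1 f) (hsol : NesterovSol n f x X)
    {t : ℝ} (ht : 0 ≤ t) : f (X t) + ‖deriv X t‖ ^ 2 / 2 ≤ f x := by
  have h := nes_energy_antitone hf hsol self_mem_Ici ht ht
  unfold Energy at h
  rw [hsol.1, nes_deriv_zero hsol] at h
  simpa using h

lemma nes_f_le (hf : ContDiff ℝ 1 f) (hsol : NesterovSol n f x X)
    {t : ℝ} (ht : 0 ≤ t) : f (X t) ≤ f x := by
  have := nes_energy_le hf hsol ht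
  nlinarith [sq_nonneg ‖deriv X t‖]

end Sol


section Est

variable {n : ℕ} {f : E n → ℝ} {x : E n} {X : ℝ → E n} {L : ℝ}

lemma cube_smul_deriv_at_zero (hsol : NesterovSol n f x X) :
    HasDerivWithinAt (fun u : ℝ => u^3 • deriv X u) 0 (Set.Ici 0) 0 := by
  rw [hasDerivWithinAt_iff_tendsto_slope]
  have hV0 : Tendsto (deriv X) (𝓝[Set.Ici 0 \ {0}] 0) (𝓝 0) := by
    have hc := (nes_contOn_deriv hsol) 0 self_mem_Ici
    have h2 := hc.tendsto
    rw [nes_deriv_zero hsol] at h2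
    exact h2.mono_left (nhdsWithin_mono _ diff_subset)
  have hsq : Tendsto (fun u : ℝ => u^2) (𝓝[Set.Ici 0 \ {0}] 0) (𝓝 0) := by
    have := (continuous_pow 2 (M := ℝ)).tendsto 0
    simpa using this.mono_left nhdsWithin_le_nhds
  have key := hsq.smul hV0
  rw [zero_smul] at key
  apply key.congr'
  filter_upwards [self_mem_nhdsWithin] with u hu
  have hu0 : u ≠ 0 := hu.2
  have : slope (fun u : ℝ => u^3 • deriv X u) 0 u
      = (u - 0)⁻¹ • (u^3 • deriv X u - (0:ℝ)^3 • deriv X 0) := rfl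
  rw [this]
  rw [sub_zero]
  have hz : ((0:ℝ)^3 • deriv X 0) = 0 := by simp
  rw [hz, sub_zero, smul_smul]
  congr 1
  field_simp

lemma cube_smul_hasDerivAt (hsol : NesterovSol n f x X) {u : ℝ} (hu : 0 < u) :
    HasDerivAt (fun v : ℝ => v^3 • deriv X v) (-(u^3 • gradient f (X u))) u := by
  have h1 : HasDerivAt (fun v : ℝ => v^3) (3 * u^2) u := by simpa using hasDerivAt_pow 3 u
  have h2 := h1.smul (nes_hasDerivAt_deriv hsol hu)
  refine h2.congr_deriv ?_
  unfold Avec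
  rw [smul_sub, smul_neg, smul_smul]
  have he : u^3 * (3/u) = 3 * u^2 := by field_simp
  rw [he]
  abel

lemma nes_estimates (hL : 0 < L) (hf : ContDiff ℝ 1 f)
    (hlip : ∀ a b : E n, ‖gradient f a - gradient f b‖ ≤ L * ‖a - b‖)
    (hsol : NesterovSol n f x X) :
    ∀ s ∈ Icc (0:ℝ) (1/(2*Real.sqrt L)),
      ‖gradient f (X s) - gradient f x‖ ≤ (4/31)*L*‖gradient f x‖*s^2 ∧
      ‖deriv X s‖ ≤ (8/31)*‖gradient f x‖*s ∧
      ‖deriv X s + (s/4) • gradient f x‖ ≤ (2/93)*L*‖gradient f x‖*s^3 := by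
  have hsqL : 0 < Real.sqrt L := Real.sqrt_pos.mpr hL
  set t1 : ℝ := 1/(2*Real.sqrt L) with ht1def
  have ht1 : 0 < t1 := by positivity
  have hLt1 : L * t1^2 = 1/4 := by
    rw [ht1def, div_pow, mul_pow, Real.sq_sqrt hL.le]
    field_simp
    ring
  -- maximum of the gradient norm along the trajectory
  have hct : ContinuousOn (fun u => ‖gradient f (X u)‖) (Icc 0 t1) := by
    apply ContinuousOn.norm
    exact (nes_cont_grad hf).comp_continuousOn ((nes_contOn hsol).mono Icc_subset_Ici_self)
  obtain ⟨u0, hu0mem, hu0max⟩ := (isCompact_Icc (a := (0:ℝ)) (b := t1)).exists_isMaxOn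
    (nonempty_Icc.mpr ht1.le) hct
  set C : ℝ := ‖gradient f (X u0)‖ with hCdef
  have hC0 : 0 ≤ C := norm_nonneg _
  have hCmax : ∀ u ∈ Icc (0:ℝ) t1, ‖gradient f (X u)‖ ≤ C := fun u hu => hu0max hu
  -- step 1 : ‖V s‖ ≤ C s / 4
  have step1 : ∀ s ∈ Icc (0:ℝ) t1, ‖s^3 • deriv X s‖ ≤ C * s^4 / 4 := by
    have := fence_pow (φ := fun u : ℝ => u^3 • deriv X u)
      (φ' := fun u : ℝ => -(u^3 • gradient f (X u))) (b := t1)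
      (c := C) (k := 3) ?cont ?zero ?hd hC0 ?bd
    · intro s hs
      have h := this s hs
      push_cast at h
      norm_num at h ⊢
      linarith
    case cont =>
      exact ((continuous_pow 3).continuousOn).smul
        ((nes_contOn_deriv hsol).mono Icc_subset_Ici_self)
    case zero => simp
    case hd =>
      intro u hu
      rcases eq_or_lt_of_le hu.1 with h | h
      · rw [← h]
        simpa using cube_smul_deriv_at_zero hsol
      · exact (cube_smul_hasDerivAt hsol h).hasDerivWithinAt
    case bd =>
      intro u hu
      rw [norm_neg, norm_smul, Real.norm_eq_abs, abs_pow, abs_of_nonneg hu.1]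
      have := hCmax u ⟨hu.1, hu.2.le⟩
      calc u^3 * ‖gradient f (X u)‖ ≤ u^3 * C := by
            apply mul_le_mul_of_nonneg_left this (pow_nonneg hu.1 3)
        _ = C * u^3 := by ring
  have hV4 : ∀ s ∈ Icc (0:ℝ) t1, ‖deriv X s‖ ≤ C * s / 4 := by
    intro s hs
    rcases eq_or_lt_of_le hs.1 with h | h
    · rw [← h, nes_deriv_zero hsol]; simp
    · have := step1 s hs
      rw [norm_smul, Real.norm_eq_abs, abs_pow, abs_of_nonneg hs.1] at this
      have hs3 : 0 < s^3 := pow_pos h 3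
      rw [show C * s^4/4 = s^3 * (C * s / 4) by ring] at this
      exact le_of_mul_le_mul_left this hs3
  -- step 2 : ‖X s - x‖ ≤ C s² / 8
  have step2 : ∀ s ∈ Icc (0:ℝ) t1, ‖X s - x‖ ≤ C * s^2 / 8 := by
    have := fence_pow (φ := fun u : ℝ => X u - x) (φ' := deriv X) (b := t1)
      (c := C/4) (k := 1) ?cont ?zero ?hd (by positivity) ?bd
    · intro s hs
      have h := this s hs
      push_cast at h
      norm_num at h ⊢
      linarith
    case cont =>
      exact ((nes_contOn hsol).mono Icc_subset_Ici_self).sub continuousOn_const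
    case zero => show X 0 - x = 0; rw [hsol.1, sub_self]
    case hd =>
      intro u hu
      rcases eq_or_lt_of_le hu.1 with h | h
      · rw [← h]
        have h0 := (hsol.2.1.differentiableOn one_ne_zero 0 self_mem_Ici).hasDerivWithinAt
        rw [hsol.2.2.2.1] at h0
        have := h0.sub_const x
        rw [← nes_deriv_zero hsol] at this
        exact this
      · exact ((nes_hasDerivAt hsol h).sub_const x).hasDerivWithinAt
    case bd =>
      intro u hu
      have := hV4 u ⟨hu.1, hu.2.le⟩
      calc ‖deriv X u‖ ≤ C * u / 4 := this
        _ = C/4 * u^1 := by ring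
  -- step 3 : C ≤ (32/31) G0
  have hLu0 : L * u0^2 ≤ 1/4 := by
    rw [← hLt1]
    have h2 : u0^2 ≤ t1^2 := pow_le_pow_left₀ hu0mem.1 hu0mem.2 2
    exact mul_le_mul_of_nonneg_left h2 hL.le
  have hCle : C ≤ (32/31) * ‖gradient f x‖ := by
    have h1 : ‖gradient f (X u0) - gradient f x‖ ≤ L * ‖X u0 - x‖ := hlip _ _
    have h2 : ‖X u0 - x‖ ≤ C * u0^2 / 8 := step2 u0 hu0mem
    have h3 : C ≤ ‖gradient f x‖ + ‖gradient f (X u0) - gradient f x‖ := by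
      have := norm_sub_norm_le (gradient f (X u0)) (gradient f x)
      rw [hCdef]
      linarith
    have h4 : L * (C * u0^2/8) = (L * u0^2) * C / 8 := by ring
    nlinarith [mul_le_mul_of_nonneg_left h2 hL.le, norm_nonneg (gradient f x)]
  -- gradient deviation
  have hGdev : ∀ s ∈ Icc (0:ℝ) t1,
      ‖gradient f (X s) - gradient f x‖ ≤ (4/31)*L*‖gradient f x‖*s^2 := by
    intro s hs
    have h1 : ‖gradient f (X s) - gradient f x‖ ≤ L * ‖X s - x‖ := hlip _ _
    have h2 := step2 s hs
    calc ‖gradient f (X s) - gradient f x‖ ≤ L * (C * s^2/8) := by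
          apply h1.trans
          exact mul_le_mul_of_nonneg_left h2 hL.le
      _ ≤ (4/31)*L*‖gradient f x‖*s^2 := by
          have hkey := mul_le_mul_of_nonneg_left hCle (mul_nonneg hL.le (sq_nonneg s))
          nlinarith [hkey]
  -- step 5 : the refined bound
  have step5 : ∀ s ∈ Icc (0:ℝ) t1,
      ‖s^3 • deriv X s + (s^4/4) • gradient f x‖
        ≤ (4/31)*L*‖gradient f x‖ * s^6 / 6 := by
    have := fence_pow (φ := fun u : ℝ => u^3 • deriv X u + (u^4/4) • gradient f x)
      (φ' := fun u : ℝ => u^3 • (gradient f x - gradient f (X u))) (b := t1)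
      (c := (4/31)*L*‖gradient f x‖) (k := 5) ?cont ?zero ?hd (by positivity) ?bd
    · intro s hs
      have h := this s hs
      push_cast at h
      norm_num at h ⊢
      linarith
    case cont =>
      apply ContinuousOn.add
      · exact ((continuous_pow 3).continuousOn).smul
          ((nes_contOn_deriv hsol).mono Icc_subset_Ici_self)
      · exact (((continuous_pow 4).div_const 4).smul continuous_const).continuousOn
    case zero => simp
    case hd =>
      intro u hu
      have hquart : HasDerivAt (fun v : ℝ => (v^4/4) • gradient f x)
          (u^3 • gradient f x) u := by
        have h1 : HasDerivAt (fun v : ℝ => v^4/4) (u^3) u := by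
          have := (hasDerivAt_pow 4 u).div_const 4
          refine this.congr_deriv ?_
          norm_num
        simpa using h1.smul_const (gradient f x)
      rcases eq_or_lt_of_le hu.1 with h | h
      · rw [← h]
        have hquart0 : HasDerivAt (fun v : ℝ => (v^4/4) • gradient f x)
            ((0:ℝ)^3 • gradient f x) 0 := by
          have h1 : HasDerivAt (fun v : ℝ => v^4/4) ((0:ℝ)^3) 0 := by
            have := (hasDerivAt_pow 4 (0:ℝ)).div_const 4
            refine this.congr_deriv ?_
            norm_num
          simpa using h1.smul_const (gradient f x)
        have hsum := (cube_smul_deriv_at_zero hsol).add (hquart0.hasDerivWithinAt)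
        refine hsum.congr_deriv ?_
        simp
      · have := (cube_smul_hasDerivAt hsol h).add hquart
        have heq : -(u^3 • gradient f (X u)) + u^3 • gradient f x
            = u^3 • (gradient f x - gradient f (X u)) := by
          rw [smul_sub]; abel
        rw [heq] at this
        exact this.hasDerivWithinAt
    case bd =>
      intro u hu
      rw [norm_smul, Real.norm_eq_abs, abs_pow, abs_of_nonneg hu.1]
      have h1 : ‖gradient f x - gradient f (X u)‖ ≤ (4/31)*L*‖gradient f x‖*u^2 := by
        rw [norm_sub_rev]
        exact hGdev u ⟨hu.1, hu.2.le⟩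
      calc u^3 * ‖gradient f x - gradient f (X u)‖
          ≤ u^3 * ((4/31)*L*‖gradient f x‖*u^2) := by
            apply mul_le_mul_of_nonneg_left h1 (pow_nonneg hu.1 3)
        _ = (4/31)*L*‖gradient f x‖ * u^5 := by ring
  -- combine
  intro s hs
  refine ⟨hGdev s hs, ?_, ?_⟩
  · have := hV4 s hs
    calc ‖deriv X s‖ ≤ C * s / 4 := this
      _ ≤ (8/31)*‖gradient f x‖*s := by nlinarith [hs.1, norm_nonneg (gradient f x)]
  · rcases eq_or_lt_of_le hs.1 with h | h
    · rw [← h, nes_deriv_zero hsol]; simp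
    · have h5 := step5 s hs
      have hfac : (s:ℝ)^3 • (deriv X s + (s/4) • gradient f x)
          = s^3 • deriv X s + (s^4/4) • gradient f x := by
        rw [smul_add, smul_smul]
        congr 2
        ring
      rw [← hfac, norm_smul, Real.norm_eq_abs, abs_pow, abs_of_nonneg hs.1] at h5
      have hs3 : 0 < s^3 := pow_pos h 3
      have : (4/31)*L*‖gradient f x‖ * s^6 / 6 = s^3 * ((2/93)*L*‖gradient f x‖*s^3) := by
        ring
      rw [this] at h5
      exact le_of_mul_le_mul_left h5 hs3

end Est

section Key

variable {n : ℕ} {f : E n → ℝ} {x : E n} {X : ℝ → E n} {L : ℝ}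

set_option maxHeartbeats 1000000 in
lemma nes_speed_deriv_pos (hL : 0 < L) (hf : ContDiff ℝ 1 f)
    (hlip : ∀ a b : E n, ‖gradient f a - gradient f b‖ ≤ L * ‖a - b‖)
    (hsol : NesterovSol n f x X) (hG : gradient f x ≠ 0) :
    ∀ s ∈ Ioc (0:ℝ) (1/(2*Real.sqrt L)),
      0 < deriv (fun v => ‖deriv X v‖ ^ 2) s := by
  have hsqL : 0 < Real.sqrt L := Real.sqrt_pos.mpr hL
  set t1 : ℝ := 1/(2*Real.sqrt L) with ht1def
  have hLt1 : L * t1^2 = 1/4 := by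
    rw [ht1def, div_pow, mul_pow, Real.sq_sqrt hL.le]
    field_simp; ring
  intro s hs
  have hs0 : 0 < s := hs.1
  have hLs : L * s^2 ≤ 1/4 := by
    rw [← hLt1]
    have h2 : s^2 ≤ t1^2 := pow_le_pow_left₀ hs0.le hs.2 2
    exact mul_le_mul_of_nonneg_left h2 hL.le
  obtain ⟨he, hVb, hr⟩ := nes_estimates hL hf hlip hsol s ⟨hs0.le, hs.2⟩
  set G : E n := gradient f x with hGdef
  set G0 : ℝ := ‖G‖ with hG0def
  have hG0 : 0 < G0 := norm_pos_iff.mpr hG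
  set r : E n := deriv X s + (s/4) • G with hrdef
  set e : E n := gradient f (X s) - G with hedef
  have hV : deriv X s = r - (s/4) • G := by rw [hrdef]; abel
  have hgrad : gradient f (X s) = G + e := by rw [hedef]; abel
  have hsA : s • Avec f X s = -((3:ℝ) • r) - (s/4) • G - s • e := by
    unfold Avec
    rw [hgrad, hV, smul_sub, smul_neg, smul_smul]
    have hss : s * (3/s) = 3 := by field_simp
    rw [hss]
    module
  have hexp : ⟪s • Avec f X s, deriv X s⟫_ℝ
      = -(3*⟪r,r⟫_ℝ) + (3*(s/4))*⟪G,r⟫_ℝ - (s/4)*⟪G,r⟫_ℝ + (s/4)*(s/4)*⟪G,G⟫_ℝ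
        - s*⟪e,r⟫_ℝ + (s*(s/4))*⟪e,G⟫_ℝ := by
    rw [hsA, hV]
    simp only [inner_sub_left, inner_sub_right, inner_neg_left, real_inner_smul_left,
      real_inner_smul_right]
    rw [real_inner_comm r G]
    ring
  have hrr : ⟪r,r⟫_ℝ = ‖r‖^2 := real_inner_self_eq_norm_sq r
  have hGG : ⟪G,G⟫_ℝ = G0^2 := real_inner_self_eq_norm_sq G
  have habs1 : |⟪G,r⟫_ℝ| ≤ G0 * ‖r‖ := abs_real_inner_le_norm G r
  have habs2 : |⟪e,r⟫_ℝ| ≤ ‖e‖ * ‖r‖ := abs_real_inner_le_norm e r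
  have habs3 : |⟪e,G⟫_ℝ| ≤ ‖e‖ * G0 := abs_real_inner_le_norm e G
  have hrb : ‖r‖ ≤ (1/186)*(G0*s) := by
    have h1 := mul_le_mul_of_nonneg_right hLs (mul_nonneg hG0.le hs0.le)
    have h2 : (2/93)*L*G0*s^3 = (2/93)*((L*s^2)*(G0*s)) := by ring
    rw [h2] at hr
    nlinarith [hr]
  have heb : ‖e‖ ≤ (1/31)*G0 := by
    have h1 := mul_le_mul_of_nonneg_right hLs hG0.le
    have h2 : (4/31)*L*G0*s^2 = (4/31)*((L*s^2)*G0) := by ring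
    rw [h2] at he
    nlinarith [he]
  have hmain : 0 < ⟪s • Avec f X s, deriv X s⟫_ℝ := by
    rw [hexp, hrr, hGG]
    have ha1 := abs_le.mp habs1
    have ha2 := abs_le.mp habs2
    have ha3 := abs_le.mp habs3
    have hrn : 0 ≤ ‖r‖ := norm_nonneg r
    have hen : 0 ≤ ‖e‖ := norm_nonneg e
    have hq1 : s * (G0 * ‖r‖) ≤ s * (G0 * ((1/186)*(G0*s))) :=
      mul_le_mul_of_nonneg_left (mul_le_mul_of_nonneg_left hrb hG0.le) hs0.le
    have hq2 : ‖e‖ * ‖r‖ ≤ ((1/31)*G0) * ((1/186)*(G0*s)) :=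
      mul_le_mul heb hrb hrn (by positivity)
    have hq2' := mul_le_mul_of_nonneg_left hq2 hs0.le
    have hq3 : ‖e‖ * G0 ≤ (1/31)*G0*G0 := mul_le_mul_of_nonneg_right heb hG0.le
    have hq3' := mul_le_mul_of_nonneg_left hq3 (mul_nonneg hs0.le hs0.le)
    have hq4 : ‖r‖*‖r‖ ≤ ((1/186)*(G0*s))*((1/186)*(G0*s)) :=
      mul_le_mul hrb hrb hrn (by positivity)
    have hb1l := mul_le_mul_of_nonneg_left ha1.1 hs0.le
    have hb1u := mul_le_mul_of_nonneg_left ha1.2 hs0.le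
    have hb2u := mul_le_mul_of_nonneg_left ha2.2 hs0.le
    have hb2l := mul_le_mul_of_nonneg_left ha2.1 hs0.le
    have hb3l := mul_le_mul_of_nonneg_left ha3.1 (mul_nonneg hs0.le hs0.le)
    have hrr2 : ‖r‖^2 = ‖r‖*‖r‖ := sq ‖r‖ ▸ rfl
    have hpos : 0 < s^2 * G0^2 := by positivity
    rw [hrr2]
    linarith [hq1, hq2', hq3', hq4, hb1l, hb1u, hb2l, hb2u, hb3l, hpos]
  have hAV : 0 < ⟪Avec f X s, deriv X s⟫_ℝ := by
    rw [real_inner_smul_left] at hmain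
    by_contra hcon
    push_neg at hcon
    nlinarith
  rw [(nes_hasDerivAt_speed hsol hs0).deriv]
  linarith

end Key

section Key2

variable {n : ℕ} {f : E n → ℝ} {x : E n} {X : ℝ → E n} {L κ : ℝ}

lemma nes_speed_lower (hL : 0 < L) (hf : ContDiff ℝ 1 f)
    (hlip : ∀ a b : E n, ‖gradient f a - gradient f b‖ ≤ L * ‖a - b‖)
    (hsol : NesterovSol n f x X) :
    (1/18) * ‖gradient f x‖^2 * (1/(2*Real.sqrt L))^2
      ≤ ‖deriv X (1/(2*Real.sqrt L))‖^2 := by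
  have hsqL : 0 < Real.sqrt L := Real.sqrt_pos.mpr hL
  set t1 : ℝ := 1/(2*Real.sqrt L) with ht1def
  have ht1 : 0 < t1 := by positivity
  have hLt1 : L * t1^2 = 1/4 := by
    rw [ht1def, div_pow, mul_pow, Real.sq_sqrt hL.le]
    field_simp; ring
  obtain ⟨-, -, hr⟩ := nes_estimates hL hf hlip hsol t1 ⟨ht1.le, le_refl _⟩
  set G : E n := gradient f x
  set G0 : ℝ := ‖G‖
  have hG0 : 0 ≤ G0 := norm_nonneg _
  have hrb : ‖deriv X t1 + (t1/4) • G‖ ≤ (1/186)*(G0*t1) := by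
    have h2 : (2/93)*L*G0*t1^3 = (2/93)*((L*t1^2)*(G0*t1)) := by ring
    rw [h2, hLt1] at hr
    calc ‖deriv X t1 + (t1/4) • G‖ ≤ 2/93*(1/4*(G0*t1)) := hr
      _ = (1/186)*(G0*t1) := by ring
  have htri : (t1/4) * G0 ≤ ‖deriv X t1 + (t1/4) • G‖ + ‖deriv X t1‖ := by
    have h1 : ‖(t1/4) • G‖ = (t1/4) * G0 := by
      rw [norm_smul, Real.norm_eq_abs, abs_of_nonneg (by positivity : (0:ℝ) ≤ t1/4)]
    have h2 : (t1/4) • G = (deriv X t1 + (t1/4) • G) - deriv X t1 := by abel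
    have h3 : ‖(t1/4) • G‖ = ‖(deriv X t1 + (t1/4) • G) - deriv X t1‖ :=
      congrArg norm h2
    rw [← h1, h3]
    exact norm_sub_le (deriv X t1 + (t1/4) • G) (deriv X t1)
  have hVlow : (91/372) * (G0 * t1) ≤ ‖deriv X t1‖ := by
    nlinarith [hrb, norm_nonneg (deriv X t1)]
  have hnn : 0 ≤ (91/372) * (G0*t1) := by positivity
  nlinarith [mul_le_mul hVlow hVlow hnn (norm_nonneg _), mul_nonneg hG0 ht1.le]

set_option maxHeartbeats 1000000 in
lemma key_pos (hκ : 1 ≤ κ) (hL : 0 < L)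
    (hfS : MemS n (L/κ) L f) {xstar : E n} (hmin : IsMinOn f Set.univ xstar)
    (hsol : NesterovSol n f x X) (hne : f x ≠ f xstar) :
    1/(2*Real.sqrt L) ≤ SpeedRestartTime n X ∧
    SpeedRestartTime n X ≤ 1/(2*Real.sqrt L) * Real.exp (13*κ) ∧
    (∀ u, 0 ≤ u → f (X u) ≤ f x) ∧
    f (X (SpeedRestartTime n X)) - f xstar ≤ (1 - 1/(72*κ)) * (f x - f xstar) := by
  obtain ⟨⟨hconv, hfc, hlip⟩, hsc⟩ := hfS
  have hκ0 : 0 < κ := lt_of_lt_of_le one_pos hκ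
  have hμ : 0 < L/κ := by positivity
  have hsqL : 0 < Real.sqrt L := Real.sqrt_pos.mpr hL
  set t1 : ℝ := 1/(2*Real.sqrt L) with ht1def
  have ht1 : 0 < t1 := by positivity
  have hLt1 : L * t1^2 = 1/4 := by
    rw [ht1def, div_pow, mul_pow, Real.sq_sqrt hL.le]
    field_simp; ring
  have hfstar : ∀ y, f xstar ≤ f y := fun y => isMinOn_iff.mp hmin y (Set.mem_univ y)
  have hΔpos : 0 < f x - f xstar :=
    sub_pos.mpr (lt_of_le_of_ne (hfstar x) (Ne.symm hne))
  have hG : gradient f x ≠ 0 := by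
    intro h0
    have h1 := convex_grad_le hconv hfc x xstar
    rw [h0] at h1
    simp only [inner_zero_left, add_zero] at h1
    linarith
  have hG0 : 0 < ‖gradient f x‖ := norm_pos_iff.mpr hG
  have hgl : 2*(L/κ)*(f x - f xstar) ≤ ‖gradient f x‖^2 := grad_sq_lower hμ hsc hfc hmin x
  have hspos := nes_speed_deriv_pos hL hfc hlip hsol hG
  set S : Set ℝ :=
    {t : ℝ | 0 < t ∧ ∀ u ∈ Set.Ioo (0:ℝ) t, 0 < deriv (fun v => ‖deriv X v‖ ^ 2) u}
    with hSdef
  have hrestart : SpeedRestartTime n X = sSup S := rfl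
  have hmemS : t1 ∈ S := ⟨ht1, fun u hu => hspos u ⟨hu.1, hu.2.le⟩⟩
  have hv1 : (1/18) * ‖gradient f x‖^2 * t1^2 ≤ ‖deriv X t1‖^2 :=
    nes_speed_lower hL hfc hlip hsol
  have ht1sq : t1^2 = 1/(4*L) := by
    field_simp at hLt1 ⊢
    linarith
  have hgt1 : (f x - f xstar)/(36*κ) ≤ ‖deriv X t1‖^2 := by
    have h1 : 2*(L/κ)*(f x - f xstar) * t1^2 ≤ ‖gradient f x‖^2 * t1^2 :=
      mul_le_mul_of_nonneg_right hgl (sq_nonneg t1)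
    rw [ht1sq] at h1
    have h2 : 2*(L/κ)*(f x - f xstar) * (1/(4*L)) = (f x - f xstar)/(2*κ) := by
      field_simp
      ring
    rw [h2] at h1
    rw [ht1sq] at hv1
    rw [div_le_iff₀ (by positivity : (0:ℝ) < 36*κ)]
    rw [div_le_iff₀ (by positivity : (0:ℝ) < 2*κ)] at h1
    have h6 := mul_le_mul_of_nonneg_right hv1 (by positivity : (0:ℝ) ≤ 36*κ)
    nlinarith [h6, h1]
  -- upper bound for members of S
  have hSb : ∀ a ∈ S, a ≤ t1 * Real.exp (13*κ) := by
    intro a haS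
    by_contra hcon
    push_neg at hcon
    set B : ℝ := t1 * Real.exp (13*κ) with hBdef
    have hexp1 : (1:ℝ) < Real.exp (13*κ) := by
      have h13 : (0:ℝ) < 13*κ := by positivity
      have := Real.add_one_le_exp (13*κ)
      linarith
    have ht1B : t1 < B := by
      rw [hBdef]
      nlinarith
    have hBa : B < a := hcon
    have hB0 : 0 < B := lt_trans ht1 ht1B
    -- speed is monotone on [t1, B]
    have hgmono : MonotoneOn (fun v => ‖deriv X v‖^2) (Set.Icc t1 B) := by
      apply monotoneOn_of_deriv_nonneg (convex_Icc t1 B)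
      · exact (nes_contOn_speed hsol).mono (fun u hu => le_trans ht1.le hu.1)
      · intro u hu
        rw [interior_Icc] at hu
        have hu0 : 0 < u := lt_trans ht1 hu.1
        exact ((nes_hasDerivAt_speed hsol hu0).differentiableAt).differentiableWithinAt
      · intro u hu
        rw [interior_Icc] at hu
        have hu0 : 0 < u := lt_trans ht1 hu.1
        exact (haS.2 u ⟨hu0, lt_trans hu.2 hBa⟩).le
    -- the auxiliary decreasing function
    set H : ℝ → ℝ := fun u => Energy f X u + (3 * ‖deriv X t1‖^2) * Real.log u with hHdef
    have hHanti : AntitoneOn H (Set.Icc t1 B) := by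
      apply antitoneOn_of_deriv_nonpos (convex_Icc t1 B)
      · apply ContinuousOn.add
        · exact (nes_contOn_energy hfc hsol).mono (fun u hu => le_trans ht1.le hu.1)
        · apply ContinuousOn.mul continuousOn_const
          apply ContinuousOn.mono Real.continuousOn_log
          intro u hu
          exact ne_of_gt (lt_of_lt_of_le ht1 hu.1)
      · intro u hu
        rw [interior_Icc] at hu
        have hu0 : 0 < u := lt_trans ht1 hu.1
        have h1 := (nes_hasDerivAt_energy hfc hsol hu0).add
          ((Real.hasDerivAt_log (ne_of_gt hu0)).const_mul (3 * ‖deriv X t1‖^2))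
        exact h1.differentiableAt.differentiableWithinAt
      · intro u hu
        rw [interior_Icc] at hu
        have hu0 : 0 < u := lt_trans ht1 hu.1
        have h1 := (nes_hasDerivAt_energy hfc hsol hu0).add
          ((Real.hasDerivAt_log (ne_of_gt hu0)).const_mul (3 * ‖deriv X t1‖^2))
        rw [show deriv H u = _ from h1.deriv]
        have h2 : ‖deriv X t1‖^2 ≤ ‖deriv X u‖^2 :=
          hgmono ⟨le_refl t1, ht1B.le⟩ ⟨hu.1.le, hu.2.le⟩ hu.1.le
        have h3 : 3 * ‖deriv X t1‖^2 * u⁻¹ ≤ 3 * ‖deriv X u‖^2 * u⁻¹ := by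
          apply mul_le_mul_of_nonneg_right ?_ (inv_nonneg.mpr hu0.le)
          linarith
        have h4 : -(3/u) * ‖deriv X u‖^2 + 3 * ‖deriv X u‖^2 * u⁻¹ = 0 := by
          field_simp
          ring
        linarith
    have hHBl := hHanti ⟨le_refl t1, ht1B.le⟩ ⟨ht1B.le, le_refl B⟩ ht1B.le
    -- unfold the consequences
    have hE1 : Energy f X t1 ≤ f x := nes_energy_le hfc hsol ht1.le
    have hEB : f xstar ≤ Energy f X B := by
      have h1 := hfstar (X B)
      have h2 : (0:ℝ) ≤ ‖deriv X B‖^2/2 := by positivity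
      unfold Energy
      linarith
    have hlogB : Real.log B = Real.log t1 + 13*κ := by
      rw [hBdef, Real.log_mul (ne_of_gt ht1) (Real.exp_ne_zero _), Real.log_exp]
    rw [hHdef] at hHBl
    simp only at hHBl
    rw [hlogB] at hHBl
    -- 3 * g t1 * 13κ ≤ Δ
    have hfinal : 3 * ‖deriv X t1‖^2 * (13*κ) ≤ f x - f xstar := by nlinarith
    have hgt1' : 3 * ((f x - f xstar)/(36*κ)) * (13*κ) = (13/12) * (f x - f xstar) := by
      field_simp
      ring
    have h5 : 3 * ((f x - f xstar)/(36*κ)) * (13*κ) ≤ 3 * ‖deriv X t1‖^2 * (13*κ) := by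
      apply mul_le_mul_of_nonneg_right ?_ (by positivity)
      apply mul_le_mul_of_nonneg_left hgt1 (by norm_num)
    rw [hgt1'] at h5
    linarith
  have hbdd : BddAbove S := ⟨t1 * Real.exp (13*κ), hSb⟩
  have hT1 : t1 ≤ sSup S := le_csSup hbdd hmemS
  have hT2 : sSup S ≤ t1 * Real.exp (13*κ) := csSup_le ⟨t1, hmemS⟩ hSb
  have hTpos : 0 < sSup S := lt_of_lt_of_le ht1 hT1
  have hgposT : ∀ u ∈ Set.Ioo (0:ℝ) (sSup S), 0 < deriv (fun v => ‖deriv X v‖^2) u := by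
    intro u hu
    obtain ⟨a, haS, hua⟩ := exists_lt_of_lt_csSup ⟨t1, hmemS⟩ hu.2
    exact haS.2 u ⟨hu.1, hua⟩
  have hfanti : AntitoneOn (fun u => f (X u)) (Set.Icc 0 (sSup S)) := by
    apply antitoneOn_of_deriv_nonpos (convex_Icc 0 (sSup S))
    · exact hfc.continuous.comp_continuousOn ((nes_contOn hsol).mono Icc_subset_Ici_self)
    · intro u hu
      rw [interior_Icc] at hu
      exact (nes_hasDerivAt_f hfc hsol hu.1).differentiableAt.differentiableWithinAt
    · intro u hu
      rw [interior_Icc] at hu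
      have hu0 : 0 < u := hu.1
      rw [(nes_hasDerivAt_f hfc hsol hu0).deriv]
      have hAV : 0 < ⟪Avec f X u, deriv X u⟫_ℝ := by
        have h := hgposT u hu
        rw [(nes_hasDerivAt_speed hsol hu0).deriv] at h
        linarith
      have hgrad_eq : gradient f (X u) = -((3/u) • deriv X u) - Avec f X u := by
        unfold Avec; abel
      rw [hgrad_eq, inner_sub_left, inner_neg_left, real_inner_smul_left,
        real_inner_self_eq_norm_sq]
      have hnn : 0 ≤ (3/u) * ‖deriv X u‖^2 := by positivity
      linarith
  rw [hrestart]
  refine ⟨hT1, hT2, fun u hu => nes_f_le hfc hsol hu, ?_⟩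
  have h1 : f (X (sSup S)) ≤ f (X t1) :=
    hfanti ⟨ht1.le, hT1⟩ ⟨hTpos.le, le_refl _⟩ hT1
  have h2 : f (X t1) + ‖deriv X t1‖^2/2 ≤ f x := nes_energy_le hfc hsol ht1.le
  have h3 : (1 - 1/(72*κ)) * (f x - f xstar)
      = (f x - f xstar) - ((f x - f xstar)/(36*κ))/2 := by
    field_simp
    ring
  rw [h3]
  linarith

lemma key_zero (hfc : ContDiff ℝ 1 f) {xstar : E n} (hmin : IsMinOn f Set.univ xstar)
    (hsol : NesterovSol n f x X) (heq : f x = f xstar) :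
    SpeedRestartTime n X = 0 := by
  have hfstar : ∀ y, f xstar ≤ f y := fun y => isMinOn_iff.mp hmin y (Set.mem_univ y)
  have hzero : ∀ u : ℝ, 0 ≤ u → ‖deriv X u‖^2 = 0 := by
    intro u hu
    have h1 := nes_energy_le hfc hsol hu
    have h2 := hfstar (X u)
    rw [heq] at h1
    nlinarith [sq_nonneg ‖deriv X u‖]
  have hS : {t : ℝ | 0 < t ∧ ∀ u ∈ Set.Ioo (0:ℝ) t, 0 < deriv (fun v => ‖deriv X v‖ ^ 2) u}
      = ∅ := by
    ext t
    simp only [Set.mem_setOf_eq, Set.mem_empty_iff_false, iff_false, not_and]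
    intro ht hall
    have hmem : t/2 ∈ Set.Ioo (0:ℝ) t := ⟨by linarith, by linarith⟩
    have h1 := hall (t/2) hmem
    have h2 : deriv (fun v => ‖deriv X v‖^2) (t/2) = 0 := by
      have hev : (fun v => ‖deriv X v‖^2) =ᶠ[𝓝 (t/2)] (fun _ => (0:ℝ)) := by
        filter_upwards [Ioi_mem_nhds (by linarith : (0:ℝ) < t/2)] with v hv
        exact hzero v (le_of_lt hv)
      rw [hev.deriv_eq]
      exact deriv_const _ _
    rw [h2] at h1
    exact lt_irrefl 0 h1
  rw [SpeedRestartTime, hS, Real.sSup_empty]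

end Key2

set_option maxHeartbeats 1000000 in
/-- **Theorem 10 (linear convergence of speed restarting).** For every condition number
`κ ≥ 1` there are constants `c₁, c₂ > 0` depending only on `κ` such that for every
`f ∈ S_{L/κ, L}`, the speed-restarted trajectory satisfies
`f(X^{sr}(t)) - f⋆ ≤ (c₁L‖x₀-x⋆‖²/2) e^{-c₂ t √L}` for all `t ≥ 0`. -/
theorem speed_restart_linear_convergence (κ : ℝ) (hκ : 1 ≤ κ) :
    ∃ c1 > (0:ℝ), ∃ c2 > (0:ℝ), ∀ (n : ℕ) (L : ℝ), 0 < L →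
      ∀ f : E n → ℝ, MemS n (L / κ) L f →
      ∀ xstar : E n, IsMinOn f Set.univ xstar →
      ∀ (x0 : E n) (Xsr : ℝ → E n) (τ : ℕ → ℝ), SpeedRestarted n f x0 Xsr τ →
      ∀ t : ℝ, 0 ≤ t →
        f (Xsr t) - f xstar ≤
          c1 * L * ‖x0 - xstar‖ ^ 2 / 2 * Real.exp (-c2 * t * Real.sqrt L) := by
  have hκ0 : 0 < κ := lt_of_lt_of_le one_pos hκ
  refine ⟨3, by norm_num, Real.exp (-(13*κ))/(36*κ), by positivity, ?_⟩
  intro n L hL f hfS xstar hmin x0 Xsr τ hSR t ht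
  obtain ⟨hτ0, hX0, hmono, htend, hint⟩ := hSR
  obtain ⟨⟨hconv, hfc, hlip⟩, hsc⟩ := id hfS
  have hfstar : ∀ y, f xstar ≤ f y := fun y => isMinOn_iff.mp hmin y (Set.mem_univ y)
  have hsqL : 0 < Real.sqrt L := Real.sqrt_pos.mpr hL
  set t1 : ℝ := 1/(2*Real.sqrt L) with ht1def
  have ht1 : 0 < t1 := by positivity
  set Tmax : ℝ := t1 * Real.exp (13*κ) with hTmaxdef
  have hTmax : 0 < Tmax := by positivity
  set ρ : ℝ := 1 - 1/(72*κ) with hρdef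
  have hρ0 : 0 ≤ ρ := by
    rw [hρdef]
    have : 1/(72*κ) ≤ 1/72 := by
      apply div_le_div_of_nonneg_left one_pos.le (by norm_num)
      linarith
    linarith
  set β : ℝ := 1/(72*κ) with hβdef
  have hβ0 : 0 < β := by positivity
  -- no restart point is at the minimum
  have hne : ∀ i, f (Xsr (τ i)) ≠ f xstar := by
    intro i heq
    obtain ⟨Xi, hXi, hτi1, hmatch⟩ := hint i
    have h0 := key_zero hfc hmin hXi heq
    have hlt := hmono (Nat.lt_succ_self i)
    rw [hτi1, h0, add_zero] at hlt
    exact lt_irrefl _ hlt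
  -- per-interval facts
  have hkey : ∀ i,
      τ i + t1 ≤ τ (i+1) ∧ τ (i+1) ≤ τ i + Tmax ∧
      (∀ t', τ i ≤ t' → t' ≤ τ (i+1) → f (Xsr t') ≤ f (Xsr (τ i))) ∧
      f (Xsr (τ (i+1))) - f xstar ≤ ρ * (f (Xsr (τ i)) - f xstar) := by
    intro i
    obtain ⟨Xi, hXi, hτi1, hmatch⟩ := hint i
    obtain ⟨hT1, hT2, hmono_f, hdec⟩ := key_pos hκ hL hfS hmin hXi (hne i)
    set T : ℝ := SpeedRestartTime n Xi with hTdef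
    have hT0 : 0 ≤ T := le_trans ht1.le hT1
    have hXsrT : Xsr (τ (i+1)) = Xi T := by
      have := hmatch T hT0 (by rw [hτi1]; ring_nf; exact le_refl _)
      rw [← this, hτi1]
    refine ⟨by rw [hτi1]; linarith, by rw [hτi1, hTmaxdef]; linarith, ?_, ?_⟩
    · intro t' h1 h2
      have hmatch' := hmatch (t' - τ i) (by linarith) (by linarith)
      rw [show τ i + (t' - τ i) = t' by ring] at hmatch'
      rw [hmatch']
      exact hmono_f (t' - τ i) (by linarith)
    · rw [hXsrT]
      calc f (Xi T) - f xstar ≤ (1 - 1/(72*κ)) * (f (Xsr (τ i)) - f xstar) := hdec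
        _ = ρ * (f (Xsr (τ i)) - f xstar) := by rw [hρdef]
  -- τ grows at most linearly
  have hτub : ∀ i, τ i ≤ i * Tmax := by
    intro i
    induction i with
    | zero => simp [hτ0]
    | succ k ih =>
      have := (hkey k).2.1
      push_cast
      push_cast at ih
      linarith
  -- geometric decay at restart points
  have hΔ0 : 0 ≤ f (Xsr (τ 0)) - f xstar := sub_nonneg.mpr (hfstar _)
  have hΔi : ∀ i, f (Xsr (τ i)) - f xstar ≤ ρ^i * (f x0 - f xstar) := by
    intro i
    induction i with
    | zero => rw [hτ0, hX0]; simp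
    | succ k ih =>
      have h1 := (hkey k).2.2.2
      calc f (Xsr (τ (k+1))) - f xstar ≤ ρ * (f (Xsr (τ k)) - f xstar) := h1
        _ ≤ ρ * (ρ^k * (f x0 - f xstar)) := mul_le_mul_of_nonneg_left ih hρ0
        _ = ρ^(k+1) * (f x0 - f xstar) := by ring
  -- locate t between restart times
  have hex : ∃ N, t < τ N := by
    have := htend.eventually (eventually_gt_atTop t)
    exact this.exists
  classical
  set k : ℕ := Nat.find hex with hkdef
  have hk : t < τ k := Nat.find_spec hex
  have hk0 : k ≠ 0 := by
    intro h0
    rw [h0, hτ0] at hk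
    linarith
  obtain ⟨i, hik⟩ : ∃ i, k = i + 1 := ⟨k - 1, (Nat.succ_pred_eq_of_pos (Nat.pos_of_ne_zero hk0)).symm⟩
  have hτit : τ i ≤ t := by
    by_contra hcon
    push_neg at hcon
    have := Nat.find_min hex (m := i) (by omega)
    exact this hcon
  have hti1 : t < τ (i+1) := by rw [← hik]; exact hk
  -- combine
  have hmain : f (Xsr t) - f xstar ≤ ρ^i * (f x0 - f xstar) := by
    have h1 := (hkey i).2.2.1 t hτit hti1.le
    have h2 := hΔi i
    linarith
  have hgap : f x0 - f xstar ≤ L/2 * ‖x0 - xstar‖^2 := init_gap_le hL hfc hlip hmin x0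
  have hgap0 : 0 ≤ f x0 - f xstar := sub_nonneg.mpr (hfstar x0)
  -- exponential bound on ρ^i
  have hρβ : ρ ≤ Real.exp (-β) := by
    have := Real.add_one_le_exp (-β)
    rw [hρdef, hβdef] at *
    linarith
  have hpow : ρ^i ≤ Real.exp (-(β * i)) := by
    calc ρ^i ≤ (Real.exp (-β))^i := pow_le_pow_left₀ hρ0 hρβ i
      _ = Real.exp (-(β * i)) := by
          rw [← Real.exp_nat_mul]
          congr 1
          ring
  -- (i+1) ≥ t / Tmax
  have hiT : t ≤ (i+1) * Tmax := le_trans hti1.le (by push_cast; exact_mod_cast hτub (i+1))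
  have hexp2 : Real.exp (-(β * i)) ≤ Real.exp β * Real.exp (-(β * t / Tmax)) := by
    rw [← Real.exp_add]
    apply Real.exp_le_exp.mpr
    have h1 : β * t / Tmax ≤ β * (i+1) := by
      rw [div_le_iff₀ hTmax]
      calc β * t ≤ β * ((i+1) * Tmax) := mul_le_mul_of_nonneg_left hiT hβ0.le
        _ = β * (i+1) * Tmax := by ring
    linarith
  -- identify the exponent
  have hexpid : β * t / Tmax = (Real.exp (-(13*κ))/(36*κ)) * t * Real.sqrt L := by
    rw [hβdef, hTmaxdef, ht1def, Real.exp_neg]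
    field_simp
    ring
  have heβ : Real.exp β ≤ 3 := by
    have h1 : β ≤ 1 := by
      rw [hβdef]
      rw [div_le_one (by positivity)]
      linarith
    calc Real.exp β ≤ Real.exp 1 := Real.exp_le_exp.mpr h1
      _ ≤ 3 := by
          have := Real.exp_one_lt_d9
          linarith
  -- final chain
  have hchain : f (Xsr t) - f xstar
      ≤ Real.exp β * Real.exp (-(β * t / Tmax)) * (f x0 - f xstar) := by
    calc f (Xsr t) - f xstar ≤ ρ^i * (f x0 - f xstar) := hmain
      _ ≤ Real.exp (-(β * i)) * (f x0 - f xstar) :=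
          mul_le_mul_of_nonneg_right hpow hgap0
      _ ≤ Real.exp β * Real.exp (-(β * t / Tmax)) * (f x0 - f xstar) :=
          mul_le_mul_of_nonneg_right hexp2 hgap0
  have hfin : Real.exp β * Real.exp (-(β * t / Tmax)) * (f x0 - f xstar)
      ≤ 3 * L * ‖x0 - xstar‖^2 / 2 * Real.exp (-(Real.exp (-(13*κ))/(36*κ)) * t * Real.sqrt L) := by
    have he1 : 0 ≤ Real.exp (-(β * t / Tmax)) := (Real.exp_pos _).le
    have h2 : Real.exp β * (f x0 - f xstar) ≤ 3 * (L/2 * ‖x0 - xstar‖^2) := by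
      calc Real.exp β * (f x0 - f xstar) ≤ 3 * (f x0 - f xstar) :=
            mul_le_mul_of_nonneg_right heβ hgap0
        _ ≤ 3 * (L/2 * ‖x0 - xstar‖^2) := by linarith
    have h3 : Real.exp (-(β * t / Tmax))
        = Real.exp (-(Real.exp (-(13*κ))/(36*κ)) * t * Real.sqrt L) := by
      congr 1
      rw [hexpid]
      ring
    rw [← h3]
    calc Real.exp β * Real.exp (-(β * t / Tmax)) * (f x0 - f xstar)
        = (Real.exp β * (f x0 - f xstar)) * Real.exp (-(β * t / Tmax)) := by ring
      _ ≤ (3 * (L/2 * ‖x0 - xstar‖^2)) * Real.exp (-(β * t / Tmax)) :=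
          mul_le_mul_of_nonneg_right h2 he1
      _ = 3 * L * ‖x0 - xstar‖^2 / 2 * Real.exp (-(β * t / Tmax)) := by ring
  calc f (Xsr t) - f xstar
      ≤ Real.exp β * Real.exp (-(β * t / Tmax)) * (f x0 - f xstar) := hchain
    _ ≤ 3 * L * ‖x0 - xstar‖^2 / 2
        * Real.exp (-(Real.exp (-(13*κ))/(36*κ)) * t * Real.sqrt L) := hfin
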